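/- Let D ⊆ ℝ^m be a nonempty convex set, a : D → ℝ a differentiable convex function, and b : D → ℝ an affine function with b(x) > 0 for all x ∈ D. Then the function f(x) = a(x)/b(x) is pseudoconvex on D: for all x, y ∈ D, if f(x) > f(y) then ⟨∇f(x), y − x⟩ < 0. -/

import Mathlib

open scoped RealInnerProductSpace

open Set Filter Topology

/-- Gradient inequality for convex functions: `⟪∇a(x), y - x⟫ ≤ a y - a x`. -/
lemma grad_ineq_aux {m : ℕ} {D : Set (EuclideanSpace ℝ (Fin m))}
    {a : EuclideanSpace ℝ (Fin m) → ℝ} {g x y : EuclideanSpace ℝ (Fin m)}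
    (hconv : ConvexOn ℝ D a) (hx : x ∈ D) (hy : y ∈ D)
    (hg : HasGradientAt a g x) : ⟪g, y - x⟫ ≤ a y - a x := by
  set v := y - x with hv
  set φ : ℝ → ℝ := fun t => a (x + t • v) with hφ
  have hline : HasDerivAt φ ⟪g, v⟫ 0 := by
    have h1 : HasDerivAt (fun t : ℝ => x + t • v) v 0 := by
      simpa using ((hasDerivAt_id (0 : ℝ)).smul_const v).const_add x
    have h2 := hg.hasFDerivAt
    rw [show x = x + (0 : ℝ) • v by simp] at h2
    have h3 := h2.comp_hasDerivAt 0 h1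
    have h4 : HasDerivAt (a ∘ fun t : ℝ => x + t • v) ⟪g, v⟫ 0 := by
      simpa [InnerProductSpace.toDual_apply_apply] using h3
    exact h4
  have hslope : Tendsto (slope φ 0) (𝓝[>] 0) (𝓝 ⟪g, v⟫) := by
    have := hasDerivAt_iff_tendsto_slope.mp hline
    exact this.mono_left (nhdsWithin_mono 0 (fun t ht => ne_of_gt ht))
  have hev : ∀ᶠ t in 𝓝[>] (0:ℝ), slope φ 0 t ≤ a y - a x := by
    filter_upwards [Ioc_mem_nhdsGT_of_mem (by simp : (0:ℝ) ∈ Ico (0:ℝ) 1)] with t ht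
    have ht0 : (0:ℝ) < t := ht.1
    have ht1 : t ≤ 1 := ht.2
    have hpt : x + t • v = (1 - t) • x + t • y := by
      rw [hv]; module
    have hc : a (x + t • v) ≤ (1 - t) * a x + t * a y := by
      rw [hpt]
      exact hconv.2 hx hy (by linarith) (le_of_lt ht0) (by ring)
    have hφ0 : φ 0 = a x := by simp [hφ]
    rw [slope_def_field, hφ0, sub_zero, div_le_iff₀ ht0]
    have : φ t = a (x + t • v) := rfl
    nlinarith [hc]
  have := le_of_tendsto hslope hev
  linarith

/-- Pseudoconvexity of the ratio of a differentiable convex function and a positive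
affine function: if `f = a / b` with `a` convex differentiable and `b` affine positive
on a nonempty convex set `D`, then `f x > f y` implies `⟪∇f(x), y - x⟫ < 0`. -/
theorem ratio_pseudoconvex {m : ℕ} (D : Set (EuclideanSpace ℝ (Fin m)))
    (hDne : D.Nonempty) (hDconv : Convex ℝ D)
    (a b : EuclideanSpace ℝ (Fin m) → ℝ)
    (a' : EuclideanSpace ℝ (Fin m) → EuclideanSpace ℝ (Fin m))
    (ha_conv : ConvexOn ℝ D a)
    (ha_diff : ∀ x ∈ D, HasGradientAt a (a' x) x)
    (w : EuclideanSpace ℝ (Fin m)) (β : ℝ)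
    (hb : ∀ x, b x = ⟪w, x⟫ + β)
    (hb_pos : ∀ x ∈ D, 0 < b x)
    (f' : EuclideanSpace ℝ (Fin m) → EuclideanSpace ℝ (Fin m))
    (hf_diff : ∀ x ∈ D, HasGradientAt (fun z => a z / b z) (f' x) x) :
    ∀ x ∈ D, ∀ y ∈ D, a x / b x > a y / b y → ⟪f' x, y - x⟫ < 0 := by
  intro x hx y hy hgt
  have hbx : 0 < b x := hb_pos x hx
  have hby : 0 < b y := hb_pos y hy
  have hbx0 : b x ≠ 0 := ne_of_gt hbx
  set v := y - x with hv
  -- fderiv of b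
  have hB : HasFDerivAt b (innerSL ℝ w) x := by
    have : HasFDerivAt (fun z => innerSL ℝ w z + β) (innerSL ℝ w) x :=
      (innerSL ℝ w).hasFDerivAt.add_const β
    exact this.congr_of_eventuallyEq (Filter.Eventually.of_forall (fun z => by
      simp [hb z]))
  -- fderiv of a
  have hA : HasFDerivAt a (InnerProductSpace.toDual ℝ _ (a' x)) x :=
    (ha_diff x hx).hasFDerivAt
  -- fderiv of b⁻¹
  have hInv : HasFDerivAt (fun z => (b z)⁻¹) ((-((b x) ^ 2)⁻¹) • innerSL ℝ w) x :=
    (hasDerivAt_inv hbx0).comp_hasFDerivAt x hB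
  -- fderiv of a * b⁻¹
  have hMul : HasFDerivAt (fun z => a z * (b z)⁻¹)
      (a x • ((-((b x) ^ 2)⁻¹) • innerSL ℝ w) +
        (b x)⁻¹ • InnerProductSpace.toDual ℝ _ (a' x)) x := hA.mul hInv
  have hMul' : HasFDerivAt (fun z => a z / b z)
      (a x • ((-((b x) ^ 2)⁻¹) • innerSL ℝ w) +
        (b x)⁻¹ • InnerProductSpace.toDual ℝ _ (a' x)) x := by
    simpa [div_eq_mul_inv] using hMul
  have huniq := (hf_diff x hx).hasFDerivAt.unique hMul'
  have hval : ⟪f' x, v⟫ =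
      a x * (-((b x) ^ 2)⁻¹ * ⟪w, v⟫) + (b x)⁻¹ * ⟪a' x, v⟫ := by
    have := congrArg (fun L : EuclideanSpace ℝ (Fin m) →L[ℝ] ℝ => L v) huniq
    simpa [InnerProductSpace.toDual_apply_apply, mul_assoc] using this
  -- affine identity
  have hwv : ⟪w, v⟫ = b y - b x := by
    rw [hv, inner_sub_right, hb y, hb x]; ring
  -- gradient inequality for a
  have hkey : ⟪a' x, v⟫ ≤ a y - a x := grad_ineq_aux ha_conv hx hy (ha_diff x hx)
  -- numerator inequality
  have hnum : a x * b y > a y * b x := by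
    rw [gt_iff_lt, div_lt_div_iff₀ hby hbx] at hgt
    linarith
  rw [hval, hwv]
  have hrw : a x * (-((b x) ^ 2)⁻¹ * (b y - b x)) + (b x)⁻¹ * ⟪a' x, v⟫ =
      (b x * ⟪a' x, v⟫ - a x * (b y - b x)) / (b x) ^ 2 := by
    field_simp
    ring
  rw [hrw]
  apply div_neg_of_neg_of_pos _ (by positivity)
  nlinarith [mul_le_mul_of_nonneg_left hkey (le_of_lt hbx)]
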